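/- The natural transformations from ⟦S ◁ P⟧ to ⟦S' ◁ P'⟧ are in bijection with ∀ i (s : S i), ⟦S' ◁ P'⟧ (P i s) i; equivalently, Nat(⟦S ◁ P⟧, ⟦S' ◁ P'⟧) ≃ ∀ i (s : S i), Σ (s' : S' i), ∀ j, P' i s' j → P i s j. -/

import Mathlib

/-- An `I`-indexed container `S ◁ P`. -/
structure ICont (I : Type) where
  S : I → Type
  P : (i : I) → S i → I → Type

variable {I : Type}

/-- The extent `⟦S ◁ P⟧ X i := Σ s : S i, ∀ j, P i s j → X j`. -/
def IExt (C : ICont I) (X : I → Type) (i : I) : Type :=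
  Σ s : C.S i, ∀ j, C.P i s j → X j

/-- Functorial action of the extent on maps of families. -/
def iExtMap (C : ICont I) {X Y : I → Type} (h : ∀ i, X i → Y i) (i : I) :
    IExt C X i → IExt C Y i :=
  fun x => ⟨x.1, fun j p => h j (x.2 j p)⟩

/-- A morphism of indexed containers, in its `(σ, π)` form. -/
structure ICHom (C D : ICont I) where
  σ : ∀ i, C.S i → D.S i
  π : ∀ (i : I) (s : C.S i) (j : I), D.P i (σ i s) j → C.P i s j

/-- The natural transformation `⟦f⟧` induced by a container morphism. -/
def ICHom.extNat {C D : ICont I} (f : ICHom C D) (X : I → Type) (i : I) :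
    IExt C X i → IExt D X i :=
  fun x => ⟨f.σ i x.1, fun j p' => x.2 j (f.π i x.1 j p')⟩

/-- The identity container morphism. -/
def ICHom.id (C : ICont I) : ICHom C C :=
  ⟨fun _ s => s, fun _ _ _ p => p⟩

/-- Composition of container morphisms (diagrammatic order). -/
def ICHom.comp {C D E : ICont I} (f : ICHom C D) (g : ICHom D E) : ICHom C E :=
  ⟨fun i s => g.σ i (f.σ i s), fun i s j p => f.π i s j (g.π i (f.σ i s) j p)⟩

/-- The identity container: shapes `Unit`, positions at `(i, ⋆, j)` given by `i = j`. -/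
def idC (I : Type) : ICont I :=
  ⟨fun _ => Unit, fun i _ j => PLift (i = j)⟩

/-- The composite (tensorIC) container. -/
def tensorIC (C D : ICont I) : ICont I :=
  ⟨fun i => IExt C D.S i,
   fun i ss k => Σ j : I, Σ p : C.P i ss.1 j, D.P j (ss.2 j p) k⟩

/-- natural transformations between extents are in bijection with
`∀ i (s : S i), Σ (s' : S' i), ∀ j, P' i s' j → P i s j`. -/
theorem nat_equiv_containerHom {I : Type} (C D : ICont I) :
    Nonempty
      ({α : ∀ (X : I → Type) (i : I), IExt C X i → IExt D X i //
          ∀ (X Y : I → Type) (h : ∀ i, X i → Y i) (i : I) (x : IExt C X i),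
            α Y i (iExtMap C h i x) = iExtMap D h i (α X i x)} ≃
        (∀ (i : I) (s : C.S i), Σ s' : D.S i, ∀ j, D.P i s' j → C.P i s j)) := by
  constructor
  refine
    { toFun := fun a i s => a.1 (C.P i s) i ⟨s, fun _ p => p⟩
      invFun := fun t =>
        ⟨fun X i x => ⟨(t i x.1).1, fun j p' => x.2 j ((t i x.1).2 j p')⟩,
         fun X Y h i x => rfl⟩
      left_inv := ?_
      right_inv := fun t => rfl }
  rintro ⟨α, nat⟩
  apply Subtype.ext
  funext X i x
  have := (nat (C.P i x.1) X x.2 i ⟨x.1, fun _ p => p⟩).symm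
  exact this
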